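/- Let c > 0 and t₀ ∈ ℝ. Let y₀ : ℝ → ℝ be twice differentiable with y₀''(t) = c² · y₀(t) for all t ≥ t₀, and y₀(t₀) > 0, y₀'(t₀) > 0. Let y : ℝ → ℝ be twice differentiable on [t₀, ∞) satisfying y''(t) ≥ c² · y(t) > 0 for all t ≥ t₀, y(t₀) = y₀(t₀), and y'(t₀) ≥ y₀'(t₀). Then y(t) ≥ y₀(t) for every t ≥ t₀. -/

import Mathlib

open Set

private lemma auxMono (t₀ : ℝ) (f f' : ℝ → ℝ)
    (hf : ∀ t ∈ Ici t₀, HasDerivWithinAt f (f' t) (Ici t₀) t)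
    (h0 : ∀ t ∈ Ici t₀, 0 ≤ f' t) : MonotoneOn f (Ici t₀) := by
  apply monotoneOn_of_hasDerivWithinAt_nonneg (f' := f') (convex_Ici t₀)
  · exact fun t ht => (hf t ht).continuousWithinAt
  · intro t ht
    rw [interior_Ici] at ht ⊢
    exact ((hf t (mem_Ici.2 (le_of_lt ht))).mono Ioi_subset_Ici_self)
  · intro t ht
    rw [interior_Ici] at ht
    exact h0 t (mem_Ici.2 (le_of_lt ht))

private lemma auxConst (t₀ : ℝ) (f f' : ℝ → ℝ)
    (hf : ∀ t ∈ Ici t₀, HasDerivWithinAt f (f' t) (Ici t₀) t)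
    (h0 : ∀ t ∈ Ici t₀, f' t = 0) : ∀ t ∈ Ici t₀, f t = f t₀ := by
  intro t ht
  have h1 := auxMono t₀ f f' hf (fun s hs => le_of_eq (h0 s hs).symm)
  have h2 := auxMono t₀ (fun s => -f s) (fun s => -f' s)
    (fun s hs => (hf s hs).neg) (fun s hs => by simp [h0 s hs])
  have ha := h1 (self_mem_Ici) ht ht
  have hb := h2 (self_mem_Ici) ht ht
  dsimp only at ha hb
  linarith

/-- Lemma 3.5: comparison principle for the differential inequality `y'' ≥ c² y > 0`. -/
theorem stmt0 (c t₀ : ℝ) (hc : 0 < c)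
    (y₀ y₀' y₀'' y y' y'' : ℝ → ℝ)
    (hy₀1 : ∀ t ∈ Ici t₀, HasDerivWithinAt y₀ (y₀' t) (Ici t₀) t)
    (hy₀2 : ∀ t ∈ Ici t₀, HasDerivWithinAt y₀' (y₀'' t) (Ici t₀) t)
    (hy₀eq : ∀ t ∈ Ici t₀, y₀'' t = c ^ 2 * y₀ t)
    (hy₀pos : 0 < y₀ t₀) (hy₀'pos : 0 < y₀' t₀)
    (hy1 : ∀ t ∈ Ici t₀, HasDerivWithinAt y (y' t) (Ici t₀) t)
    (hy2 : ∀ t ∈ Ici t₀, HasDerivWithinAt y' (y'' t) (Ici t₀) t)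
    (hineq : ∀ t ∈ Ici t₀, c ^ 2 * y t ≤ y'' t)
    (hypos : ∀ t ∈ Ici t₀, 0 < y t)
    (hinit : y t₀ = y₀ t₀)
    (hinit' : y₀' t₀ ≤ y' t₀) :
    ∀ t ∈ Ici t₀, y₀ t ≤ y t := by
  -- Step 1: y₀ > 0 on Ici t₀
  have hU : ∀ t ∈ Ici t₀,
      HasDerivWithinAt (fun s => (y₀' s + c * y₀ s) * Real.exp (-(c * s)))
        0 (Ici t₀) t := by
    intro t ht
    have hexp : HasDerivWithinAt (fun s => Real.exp (-(c * s)))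
        (Real.exp (-(c * t)) * (-c)) (Ici t₀) t := by
      have : HasDerivWithinAt (fun s : ℝ => -(c * s)) (-c) (Ici t₀) t := by
        exact ((hasDerivWithinAt_id t (Ici t₀)).const_mul c).neg.congr_deriv (by ring)
      refine ((Real.hasDerivAt_exp (-(c * t))).comp_hasDerivWithinAt t this).congr_deriv ?_
      ring
    have h := (((hy₀2 t ht).add ((hy₀1 t ht).const_mul c)).mul hexp)
    refine h.congr_deriv ?_
    rw [hy₀eq t ht]
    simp only [Pi.add_apply]
    ring
  have hV : ∀ t ∈ Ici t₀,
      HasDerivWithinAt (fun s => (y₀' s - c * y₀ s) * Real.exp (c * s))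
        0 (Ici t₀) t := by
    intro t ht
    have hexp : HasDerivWithinAt (fun s => Real.exp (c * s))
        (Real.exp (c * t) * c) (Ici t₀) t := by
      have : HasDerivWithinAt (fun s : ℝ => c * s) c (Ici t₀) t := by
        simpa using ((hasDerivWithinAt_id t (Ici t₀)).const_mul c)
      exact ((Real.hasDerivAt_exp (c * t)).comp_hasDerivWithinAt t this).congr_deriv (by ring)
    have h := (((hy₀2 t ht).sub ((hy₀1 t ht).const_mul c)).mul hexp)
    refine h.congr_deriv ?_
    rw [hy₀eq t ht]
    simp only [Pi.sub_apply]
    ring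
  have hUc := auxConst t₀ _ (fun _ => 0) hU (fun _ _ => rfl)
  have hVc := auxConst t₀ _ (fun _ => 0) hV (fun _ _ => rfl)
  have hy₀pos' : ∀ t ∈ Ici t₀, 0 < y₀ t := by
    intro t ht
    have h1 := hUc t ht
    have h2 := hVc t ht
    set E := Real.exp (c * (t - t₀)) with hEdef
    set F := Real.exp (-(c * (t - t₀))) with hFdef
    have hE : (1:ℝ) ≤ E := Real.one_le_exp (by nlinarith [mem_Ici.1 ht])
    have hF : 0 < F := Real.exp_pos _
    have hEF : E * F = 1 := by
      rw [hEdef, hFdef, ← Real.exp_add]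
      simp
    have e1 : y₀' t + c * y₀ t = (y₀' t₀ + c * y₀ t₀) * E := by
      have hx : Real.exp (-(c * t₀)) = Real.exp (-(c * t)) * E := by
        rw [hEdef, ← Real.exp_add]
        ring_nf
      rw [hx] at h1
      have h' : (y₀' t + c * y₀ t) * Real.exp (-(c * t))
          = ((y₀' t₀ + c * y₀ t₀) * E) * Real.exp (-(c * t)) := by
        rw [h1]; ring
      exact mul_right_cancel₀ (Real.exp_ne_zero _) h'
    have e2 : y₀' t - c * y₀ t = (y₀' t₀ - c * y₀ t₀) * F := by
      have hx : Real.exp (c * t₀) = F * Real.exp (c * t) := by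
        rw [hFdef, ← Real.exp_add]
        ring_nf
      rw [hx] at h2
      have h' : (y₀' t - c * y₀ t) * Real.exp (c * t)
          = ((y₀' t₀ - c * y₀ t₀) * F) * Real.exp (c * t) := by
        rw [h2]; ring
      exact mul_right_cancel₀ (Real.exp_ne_zero _) h'
    have key : 2 * (c * y₀ t) = (y₀' t₀ + c * y₀ t₀) * E - (y₀' t₀ - c * y₀ t₀) * F := by
      linarith [e1, e2]
    have hb : 0 < c * y₀ t₀ := mul_pos hc hy₀pos
    rcases le_or_gt (y₀' t₀ - c * y₀ t₀) 0 with hs | hs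
    · have h3 : (y₀' t₀ - c * y₀ t₀) * F ≤ 0 := mul_nonpos_of_nonpos_of_nonneg hs hF.le
      nlinarith
    · have hF1 : F ≤ 1 := by nlinarith
      nlinarith [mul_le_mul_of_nonneg_left hE (by positivity : (0:ℝ) ≤ y₀' t₀ + c * y₀ t₀),
        mul_le_mul_of_nonneg_left hF1 hs.le]
  -- Step 2: Wronskian W = y' * y₀ - y * y₀' is nondecreasing
  have hW : ∀ t ∈ Ici t₀,
      HasDerivWithinAt (fun s => y' s * y₀ s - y s * y₀' s)
        (y'' t * y₀ t - y t * y₀'' t) (Ici t₀) t := by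
    intro t ht
    have h := ((hy2 t ht).mul (hy₀1 t ht)).sub ((hy1 t ht).mul (hy₀2 t ht))
    refine h.congr_deriv ?_
    ring
  have hWmono := auxMono t₀ _ _ hW (by
    intro t ht
    rw [hy₀eq t ht]
    have h1 := hineq t ht
    have h2 := (hy₀pos' t ht).le
    have h3 := (hypos t ht).le
    nlinarith)
  have hWnonneg : ∀ t ∈ Ici t₀, 0 ≤ y' t * y₀ t - y t * y₀' t := by
    intro t ht
    have := hWmono self_mem_Ici ht ht
    dsimp only at this
    have h0 : 0 ≤ y' t₀ * y₀ t₀ - y t₀ * y₀' t₀ := by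
      rw [hinit]; nlinarith
    linarith
  -- Step 3: ratio r = y / y₀ is nondecreasing
  have hr : ∀ t ∈ Ici t₀,
      HasDerivWithinAt (fun s => y s / y₀ s)
        ((y' t * y₀ t - y t * y₀' t) / (y₀ t) ^ 2) (Ici t₀) t := by
    intro t ht
    exact (hy1 t ht).div (hy₀1 t ht) (hy₀pos' t ht).ne'
  have hrmono := auxMono t₀ _ _ hr (by
    intro t ht
    exact div_nonneg (hWnonneg t ht) (sq_nonneg _))
  intro t ht
  have := hrmono self_mem_Ici ht ht
  dsimp only at this
  have h1 : y t₀ / y₀ t₀ = 1 := by rw [hinit]; field_simp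
  rw [h1] at this
  have := (one_le_div (hy₀pos' t ht)).1 this
  linarith
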